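/- Let F be a field, let M be an n×m matrix over F and let R be the rook matrix of M. Let J_n denote the n×n reversal permutation matrix (the permutation matrix of i ↦ n+1−i). Then the rook matrix of the m×n matrix J_m · Mᵀ · J_n equals J_m · Rᵀ · J_n. (The rook matrix of the transpose with reversed row and column orders is the correspondingly reversed transpose of the rook matrix.) -/
import Mathlib


/-- A square matrix is unitriangular if it is upper triangular with 1's on the diagonal. -/
def Matrix.IsUnitriangular {n : ℕ} {R : Type*} [Zero R] [One R]
    (A : Matrix (Fin n) (Fin n) R) : Prop :=
  (∀ i, A i i = 1) ∧ ∀ i j : Fin n, j < i → A i j = 0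

/-- A matrix is a rook matrix if every row and every column contains
at most one nonzero entry. -/
def Matrix.IsRook {n m : ℕ} {F : Type*} [Zero F]
    (R : Matrix (Fin n) (Fin m) F) : Prop :=
  (∀ i j j', R i j ≠ 0 → R i j' ≠ 0 → j = j') ∧
  (∀ i i' j, R i j ≠ 0 → R i' j ≠ 0 → i = i')

/-- The reversal permutation matrix `J_n`, the permutation matrix of `i ↦ n + 1 - i`. -/
def revMatrix (n : ℕ) (F : Type*) [Zero F] [One F] : Matrix (Fin n) (Fin n) F :=
  Matrix.of fun i j => if j = i.rev then 1 else 0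

/-! ### Auxiliary combinatorial lemmas -/

lemma aux_le_eq {k : ℕ} (s : Finset (Fin k)) (g : Fin k → Fin k)
    (hmem : ∀ l ∈ s, g l ∈ s) (hle : ∀ l ∈ s, g l ≤ l)
    (hinj : ∀ l ∈ s, ∀ l' ∈ s, g l = g l' → l = l') : ∀ l ∈ s, g l = l := by
  have himg : s.image g = s := by
    apply Finset.eq_of_subset_of_card_le
    · intro x hx
      obtain ⟨l, hl, rfl⟩ := Finset.mem_image.1 hx
      exact hmem l hl
    · rw [Finset.card_image_of_injOn (fun a ha b hb => hinj a ha b hb)]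
  have hsum : ∑ l ∈ s, ((g l : ℕ)) = ∑ l ∈ s, (l : ℕ) := by
    calc ∑ l ∈ s, ((g l : ℕ)) = ∑ x ∈ s.image g, (x : ℕ) :=
          (Finset.sum_image (fun a ha b hb => hinj a ha b hb)).symm
      _ = ∑ l ∈ s, (l : ℕ) := by rw [himg]
  intro l hl
  exact Fin.val_injective
    ((Finset.sum_eq_sum_iff_of_le (fun i hi => Fin.le_def.1 (hle i hi))).1 hsum l hl)

lemma aux_ge_eq {k : ℕ} (s : Finset (Fin k)) (g : Fin k → Fin k)
    (hmem : ∀ l ∈ s, g l ∈ s) (hge : ∀ l ∈ s, l ≤ g l)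
    (hinj : ∀ l ∈ s, ∀ l' ∈ s, g l = g l' → l = l') : ∀ l ∈ s, g l = l := by
  have himg : s.image g = s := by
    apply Finset.eq_of_subset_of_card_le
    · intro x hx
      obtain ⟨l, hl, rfl⟩ := Finset.mem_image.1 hx
      exact hmem l hl
    · rw [Finset.card_image_of_injOn (fun a ha b hb => hinj a ha b hb)]
  have hsum : ∑ l ∈ s, ((l : ℕ)) = ∑ l ∈ s, ((g l : ℕ)) := by
    calc ∑ l ∈ s, ((l : ℕ)) = ∑ x ∈ s.image g, (x : ℕ) := by rw [himg]
      _ = ∑ l ∈ s, ((g l : ℕ)) := Finset.sum_image (fun a ha b hb => hinj a ha b hb)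
  intro l hl
  exact (Fin.val_injective
    ((Finset.sum_eq_sum_iff_of_le (fun i hi => Fin.le_def.1 (hge i hi))).1 hsum l hl)).symm

/-! ### The key uniqueness lemma -/

lemma rook_eq_of_rel {F : Type*} [Field F] {n m : ℕ}
    {A : Matrix (Fin n) (Fin n) F} {B : Matrix (Fin m) (Fin m) F}
    {R S : Matrix (Fin n) (Fin m) F}
    (hA : A.IsUnitriangular) (hB : B.IsUnitriangular)
    (hR : R.IsRook) (hS : S.IsRook) (h : A * R = S * B) : R = S := by
  classical
  rcases Nat.eq_zero_or_pos n with hn | hn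
  · ext i j
    exact absurd i.isLt (by omega)
  rcases Nat.eq_zero_or_pos m with hm | hm
  · ext i j
    exact absurd j.isLt (by omega)
  have in_n : Inhabited (Fin n) := ⟨⟨0, hn⟩⟩
  have in_m : Inhabited (Fin m) := ⟨⟨0, hm⟩⟩
  -- pivot row of each column of R
  have hexp : ∀ l : Fin m, ∃ pl : Fin n, ∀ k, R k l ≠ 0 → k = pl ∧ R pl l ≠ 0 := by
    intro l
    by_cases hc : ∃ k, R k l ≠ 0
    · obtain ⟨k0, hk0⟩ := hc
      exact ⟨k0, fun k hk => ⟨hR.2 k k0 l hk hk0, hk0⟩⟩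
    · push_neg at hc
      exact ⟨default, fun k hk => (hk (hc k)).elim⟩
  choose p hp using hexp
  -- pivot column of each row of S
  have hexq : ∀ i : Fin n, ∃ qi : Fin m, ∀ j, S i j ≠ 0 → j = qi ∧ S i qi ≠ 0 := by
    intro i
    by_cases hc : ∃ j, S i j ≠ 0
    · obtain ⟨j0, hj0⟩ := hc
      exact ⟨j0, fun j hj => ⟨hS.1 i j j0 hj hj0, hj0⟩⟩
    · push_neg at hc
      exact ⟨default, fun j hj => (hj (hc j)).elim⟩
  choose q hq using hexq
  -- structure of T = A * R = S * B
  have hTcol : ∀ i l k, R k l ≠ 0 → (A * R) i l = A i k * R k l := by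
    intro i l k hk
    rw [Matrix.mul_apply]
    apply Finset.sum_eq_single k
    · intro b _ hbk
      by_cases hb : R b l = 0
      · rw [hb, mul_zero]
      · exact absurd ((hp l b hb).1.trans (hp l k hk).1.symm) hbk
    · simp
  have hTcol0 : ∀ i l, (∀ k, R k l = 0) → (A * R) i l = 0 := by
    intro i l h0
    rw [Matrix.mul_apply]
    simp [h0]
  have hTrow : ∀ i l j, S i j ≠ 0 → (S * B) i l = S i j * B j l := by
    intro i l j hj
    rw [Matrix.mul_apply]
    apply Finset.sum_eq_single j
    · intro b _ hbj
      by_cases hb : S i b = 0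
      · rw [hb, zero_mul]
      · exact absurd ((hq i b hb).1.trans (hq i j hj).1.symm) hbj
    · simp
  have hTrow0 : ∀ i l, (∀ j, S i j = 0) → (S * B) i l = 0 := by
    intro i l h0
    rw [Matrix.mul_apply]
    simp [h0]
  -- every pivot of R points to a pivot of S weakly to its left, in the same row
  have key1 : ∀ l k, R k l ≠ 0 → S k (q k) ≠ 0 ∧ q k ≤ l := by
    intro l k hk
    have hk' : k = p l := (hp l k hk).1
    have hT : (A * R) k l = R k l := by
      rw [hTcol k l k hk, hA.1 k, one_mul]
    have hT' : (S * B) k l ≠ 0 := by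
      rw [← h, hT]; exact hk
    have hrow : ∃ j, S k j ≠ 0 := by
      by_contra hcon
      push_neg at hcon
      exact hT' (hTrow0 k l hcon)
    obtain ⟨j0, hj0⟩ := hrow
    have hq0 := hq k j0 hj0
    refine ⟨hq0.2, ?_⟩
    have hmulne : S k (q k) * B (q k) l ≠ 0 := by
      rw [← hTrow k l (q k) hq0.2]; exact hT'
    have hBne : B (q k) l ≠ 0 := fun h0 => hmulne (by rw [h0, mul_zero])
    by_contra hlt
    push_neg at hlt
    exact hBne (hB.2 (q k) l hlt)
  -- every pivot of S points to a pivot of R weakly below it, in the same column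
  have key2 : ∀ i j, S i j ≠ 0 → R (p j) j ≠ 0 ∧ i ≤ p j := by
    intro i j hj
    have hT : (S * B) i j = S i j := by
      rw [hTrow i j j hj, hB.1 j, mul_one]
    have hT' : (A * R) i j ≠ 0 := by
      rw [h, hT]; exact hj
    have hcol : ∃ k, R k j ≠ 0 := by
      by_contra hcon
      push_neg at hcon
      exact hT' (hTcol0 i j hcon)
    obtain ⟨k0, hk0⟩ := hcol
    have hp0 := hp j k0 hk0
    refine ⟨hp0.2, ?_⟩
    have hmulne : A i (p j) * R (p j) j ≠ 0 := by
      rw [← hTcol i j (p j) hp0.2]; exact hT'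
    have hAne : A i (p j) ≠ 0 := fun h0 => hmulne (by rw [h0, zero_mul])
    by_contra hlt
    push_neg at hlt
    exact hAne (hA.2 i (p j) hlt)
  -- the composite maps are identities
  set s : Finset (Fin m) := Finset.univ.filter (fun l => ∃ k, R k l ≠ 0) with hs_def
  have hg : ∀ l ∈ s, q (p l) = l := by
    apply aux_le_eq s (fun l => q (p l))
    · intro l hl
      obtain ⟨k, hk⟩ := (Finset.mem_filter.1 hl).2
      have hk1 := key1 l (p l) (hp l k hk).2
      have hk2 := key2 (p l) (q (p l)) hk1.1
      exact Finset.mem_filter.2 ⟨Finset.mem_univ _, ⟨_, hk2.1⟩⟩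
    · intro l hl
      obtain ⟨k, hk⟩ := (Finset.mem_filter.1 hl).2
      exact (key1 l (p l) (hp l k hk).2).2
    · intro l hl l' hl' heq
      obtain ⟨k, hk⟩ := (Finset.mem_filter.1 hl).2
      obtain ⟨k', hk'⟩ := (Finset.mem_filter.1 hl').2
      have h1 := (key1 l (p l) (hp l k hk).2).1
      have h2 := (key1 l' (p l') (hp l' k' hk').2).1
      have hpp : p l = p l' := hS.2 (p l) (p l') (q (p l)) h1 (by rw [heq]; exact h2)
      exact hR.1 (p l) l l' (hp l k hk).2 (by rw [hpp]; exact (hp l' k' hk').2)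
  set t : Finset (Fin n) := Finset.univ.filter (fun i => ∃ j, S i j ≠ 0) with ht_def
  have hh : ∀ i ∈ t, p (q i) = i := by
    apply aux_ge_eq t (fun i => p (q i))
    · intro i hi
      obtain ⟨j, hj⟩ := (Finset.mem_filter.1 hi).2
      have hk2 := key2 i (q i) (hq i j hj).2
      have hk1 := key1 (q i) (p (q i)) hk2.1
      exact Finset.mem_filter.2 ⟨Finset.mem_univ _, ⟨_, hk1.1⟩⟩
    · intro i hi
      obtain ⟨j, hj⟩ := (Finset.mem_filter.1 hi).2
      exact (key2 i (q i) (hq i j hj).2).2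
    · intro i hi i' hi' heq
      obtain ⟨j, hj⟩ := (Finset.mem_filter.1 hi).2
      obtain ⟨j', hj'⟩ := (Finset.mem_filter.1 hi').2
      have h1 := (key2 i (q i) (hq i j hj).2).1
      have h2 := (key2 i' (q i') (hq i' j' hj').2).1
      have hqq : q i = q i' := hR.1 (p (q i)) (q i) (q i') h1 (by rw [heq]; exact h2)
      exact hS.2 i i' (q i) (hq i j hj).2 (by rw [hqq]; exact (hq i' j' hj').2)
  -- conclude
  ext i j
  by_cases hRij : R i j = 0
  · by_cases hSij : S i j = 0
    · rw [hRij, hSij]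
    · exfalso
      have hji : j = q i := (hq i j hSij).1
      have hi_t : i ∈ t := Finset.mem_filter.2 ⟨Finset.mem_univ _, ⟨j, hSij⟩⟩
      have h1 : R (p j) j ≠ 0 := (key2 i j hSij).1
      have h2 : p j = i := by rw [hji]; exact hh i hi_t
      rw [h2] at h1
      exact h1 hRij
  · have hij : i = p j := (hp j i hRij).1
    have hj_s : j ∈ s := Finset.mem_filter.2 ⟨Finset.mem_univ _, ⟨i, hRij⟩⟩
    have hqpj : q (p j) = j := hg j hj_s
    have hSnz : S i j ≠ 0 := by
      have h1 := (key1 j (p j) (hp j i hRij).2).1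
      rwa [hqpj, ← hij] at h1
    have e1 : (A * R) i j = R i j := by
      rw [hTcol i j i hRij, hA.1 i, one_mul]
    have e2 : (S * B) i j = S i j := by
      rw [hTrow i j j hSnz, hB.1 j, mul_one]
    rw [← e1, h, e2]

/-! ### Unitriangular matrices -/

lemma unitri_mul {n : ℕ} {F : Type*} [Field F] {A B : Matrix (Fin n) (Fin n) F}
    (hA : A.IsUnitriangular) (hB : B.IsUnitriangular) : (A * B).IsUnitriangular := by
  constructor
  · intro i
    rw [Matrix.mul_apply, Finset.sum_eq_single i]
    · rw [hA.1 i, hB.1 i, one_mul]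
    · intro b _ hbi
      rcases lt_or_gt_of_ne hbi with hlt | hgt
      · rw [hA.2 i b hlt, zero_mul]
      · rw [hB.2 b i hgt, mul_zero]
    · simp
  · intro i j hji
    rw [Matrix.mul_apply]
    apply Finset.sum_eq_zero
    intro k _
    rcases lt_or_ge k i with hk | hk
    · rw [hA.2 i k hk, zero_mul]
    · rw [hB.2 k j (lt_of_lt_of_le hji hk), mul_zero]

lemma unitri_inv {n : ℕ} {F : Type*} [Field F] {A : Matrix (Fin n) (Fin n) F}
    (hA : A.IsUnitriangular) :
    A⁻¹.IsUnitriangular ∧ A * A⁻¹ = 1 ∧ A⁻¹ * A = 1 := by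
  have hbt : A.BlockTriangular id := fun i j hij => hA.2 i j hij
  have hdet : A.det = 1 := by
    rw [Matrix.det_of_upperTriangular hbt]
    simp [hA.1]
  have hu : IsUnit A.det := by rw [hdet]; exact isUnit_one
  have h1 : A * A⁻¹ = 1 := Matrix.mul_nonsing_inv A hu
  have h2 : A⁻¹ * A = 1 := Matrix.nonsing_inv_mul A hu
  have : Invertible A := A.invertibleOfIsUnitDet hu
  have hbt' : A⁻¹.BlockTriangular id := Matrix.blockTriangular_inv_of_blockTriangular hbt
  refine ⟨⟨?_, fun i j hij => hbt' hij⟩, h1, h2⟩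
  intro i
  have h3 : (A⁻¹ * A) i i = A⁻¹ i i := by
    rw [Matrix.mul_apply, Finset.sum_eq_single i]
    · rw [hA.1 i, mul_one]
    · intro b _ hbi
      rcases lt_or_gt_of_ne hbi with hlt | hgt
      · rw [hbt' hlt, zero_mul]
      · rw [hA.2 b i hgt, mul_zero]
    · simp
  rw [h2, Matrix.one_apply_eq] at h3
  exact h3.symm

/-! ### revMatrix lemmas -/

lemma revMatrix_mul_apply {n m : ℕ} {F : Type*} [Field F] (X : Matrix (Fin n) (Fin m) F)
    (i : Fin n) (j : Fin m) : (revMatrix n F * X) i j = X i.rev j := by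
  rw [Matrix.mul_apply, Finset.sum_eq_single i.rev]
  · simp [revMatrix]
  · intro b _ hb
    simp [revMatrix, hb]
  · simp

lemma mul_revMatrix_apply {n m : ℕ} {F : Type*} [Field F] (X : Matrix (Fin n) (Fin m) F)
    (i : Fin n) (j : Fin m) : (X * revMatrix m F) i j = X i j.rev := by
  rw [Matrix.mul_apply, Finset.sum_eq_single j.rev]
  · simp [revMatrix, Fin.rev_rev]
  · intro b _ hb
    have hne : j ≠ b.rev := by
      intro hc
      exact hb (by rw [hc, Fin.rev_rev])
    simp [revMatrix, hne]
  · simp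

lemma revMatrix_mul_self {k : ℕ} {F : Type*} [Field F] :
    revMatrix k F * revMatrix k F = 1 := by
  ext i j
  rw [revMatrix_mul_apply]
  simp [revMatrix, Matrix.one_apply, Fin.rev_rev, eq_comm]

lemma rev_transpose_apply {n m : ℕ} {F : Type*} [Field F] (R : Matrix (Fin n) (Fin m) F)
    (i : Fin m) (j : Fin n) :
    (revMatrix m F * R.transpose * revMatrix n F) i j = R j.rev i.rev := by
  rw [mul_revMatrix_apply, revMatrix_mul_apply]
  rfl

lemma unitri_rev_transpose {k : ℕ} {F : Type*} [Field F] {B : Matrix (Fin k) (Fin k) F}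
    (hB : B.IsUnitriangular) :
    (revMatrix k F * B.transpose * revMatrix k F).IsUnitriangular := by
  constructor
  · intro i
    rw [rev_transpose_apply]
    exact hB.1 i.rev
  · intro i j hji
    rw [rev_transpose_apply]
    exact hB.2 j.rev i.rev (Fin.rev_lt_rev.2 hji)

lemma rook_rev {n m : ℕ} {F : Type*} [Field F] {R : Matrix (Fin n) (Fin m) F}
    (hR : R.IsRook) : (revMatrix m F * R.transpose * revMatrix n F).IsRook := by
  constructor
  · intro i j j' h1 h2
    rw [rev_transpose_apply] at h1 h2
    exact Fin.rev_injective (hR.2 j.rev j'.rev i.rev h1 h2)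
  · intro i i' j h1 h2
    rw [rev_transpose_apply] at h1 h2
    exact Fin.rev_injective (hR.1 j.rev i.rev i'.rev h1 h2)

/-! ### Orbit uniqueness -/

lemma rook_orbit_unique {F : Type*} [Field F] {n m : ℕ} {Y R S : Matrix (Fin n) (Fin m) F}
    (hR : R.IsRook) (hS : S.IsRook)
    {A1 A2 : Matrix (Fin n) (Fin n) F} {B1 B2 : Matrix (Fin m) (Fin m) F}
    (hA1 : A1.IsUnitriangular) (hB1 : B1.IsUnitriangular)
    (hA2 : A2.IsUnitriangular) (hB2 : B2.IsUnitriangular)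
    (h1 : A1 * Y * B1 = R) (h2 : A2 * Y * B2 = S) : R = S := by
  obtain ⟨hA1i, _, hA1l⟩ := unitri_inv hA1
  obtain ⟨hB2i, hB2r, _⟩ := unitri_inv hB2
  apply rook_eq_of_rel (unitri_mul hA2 hA1i) (unitri_mul hB2i hB1) hR hS
  rw [← h1, ← h2]
  simp only [Matrix.mul_assoc]
  rw [← Matrix.mul_assoc A1⁻¹ A1, hA1l, Matrix.one_mul,
    ← Matrix.mul_assoc B2 B2⁻¹, hB2r, Matrix.one_mul]

/-- The rook matrix of `J_m * M.transpose * J_n` is `J_m * R.transpose * J_n`, where `R` is the rook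
matrix of `M`. -/
theorem rook_matrix_transpose_rev {F : Type*} [Field F] {n m : ℕ}
    (M R : Matrix (Fin n) (Fin m) F) (hRrook : R.IsRook)
    (hRorb : ∃ (A : Matrix (Fin n) (Fin n) F) (B : Matrix (Fin m) (Fin m) F),
      A.IsUnitriangular ∧ B.IsUnitriangular ∧ A * M * B = R)
    (R' : Matrix (Fin m) (Fin n) F) (hR'rook : R'.IsRook)
    (hR'orb : ∃ (A : Matrix (Fin m) (Fin m) F) (B : Matrix (Fin n) (Fin n) F),
      A.IsUnitriangular ∧ B.IsUnitriangular ∧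
      A * (revMatrix m F * M.transpose * revMatrix n F) * B = R') :
    R' = revMatrix m F * R.transpose * revMatrix n F := by
  obtain ⟨A, B, hA, hB, hAB⟩ := hRorb
  obtain ⟨A', B', hA', hB', hAB'⟩ := hR'orb
  have c1 : ∀ (k : ℕ) (X : Matrix (Fin n) (Fin k) F),
      revMatrix n F * (revMatrix n F * X) = X := by
    intro k X
    rw [← Matrix.mul_assoc, revMatrix_mul_self, Matrix.one_mul]
  have c2 : ∀ (k : ℕ) (X : Matrix (Fin m) (Fin k) F),
      revMatrix m F * (revMatrix m F * X) = X := by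
    intro k X
    rw [← Matrix.mul_assoc, revMatrix_mul_self, Matrix.one_mul]
  have hX : (revMatrix m F * B.transpose * revMatrix m F) *
      (revMatrix m F * M.transpose * revMatrix n F) *
      (revMatrix n F * A.transpose * revMatrix n F) =
      revMatrix m F * R.transpose * revMatrix n F := by
    have hRt : R.transpose = B.transpose * (M.transpose * A.transpose) := by
      rw [← hAB, Matrix.transpose_mul, Matrix.transpose_mul]
    rw [hRt]
    simp only [Matrix.mul_assoc]
    rw [c2, c1]
  exact rook_orbit_unique hR'rook (rook_rev hRrook) hA' hB'
    (unitri_rev_transpose hB) (unitri_rev_transpose hA) hAB' hX
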